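/- Let X be a D-forced space and S ⊆ X dense such that for every D ∈ D either S ∩ D is nowhere dense or S \ D is nowhere dense. Then the subspace S is OHI, i.e. every dense subset of the subspace S contains a subset open in S and dense in S. -/
import Mathlib


open Cardinal Set

universe u

variable {X : Type u} [TopologicalSpace X]

/-- A `(𝒟,X)`-mosaic. -/
def IsMosaic (𝒟 : Set (Set X)) (M : Set X) : Prop :=
  ∃ (𝒱 : Set (Set X)) (f : Set X → Set X),
    (∀ V ∈ 𝒱, IsOpen V) ∧ 𝒱.PairwiseDisjoint id ∧ Dense (⋃₀ 𝒱) ∧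
    (∀ V ∈ 𝒱, f V ∈ 𝒟) ∧ M = ⋃ V ∈ 𝒱, V ∩ f V

/-- `X` is `𝒟`-forced iff every dense subset of `X` includes a `𝒟`-mosaic. -/
def DForced (𝒟 : Set (Set X)) : Prop :=
  ∀ S : Set X, Dense S → ∃ M ⊆ S, IsMosaic 𝒟 M

/-- If `X` is `𝒟`-forced and `S` is dense in `X` such that for every `D ∈ 𝒟` either
`S ∩ D =* ∅` or `S ⊆* D` (modulo nowhere dense sets), then the subspace `S` is OHI:
every dense subset of the subspace `S` contains a subset that is relatively open in `S`
and dense in `S`. -/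
theorem stmt_7 (𝒟 : Set (Set X)) (h𝒟 : ∀ D ∈ 𝒟, Dense D) (hf : DForced 𝒟)
    (S : Set X) (hS : Dense S)
    (hsplit : ∀ D ∈ 𝒟, IsNowhereDense (S ∩ D) ∨ IsNowhereDense (S \ D)) :
    ∀ T ⊆ S, S ⊆ closure T →
      ∃ T' ⊆ T, (∃ U : Set X, IsOpen U ∧ T' = U ∩ S) ∧ S ⊆ closure T' := by
  intro T hTS hST
  have hTdense : Dense T := dense_closure.mp (hS.mono hST)
  obtain ⟨M, hMT, 𝒱, f, hopen, _hdisj, hUdense, hfD, hMeq⟩ := hf T hTdense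
  -- every nonempty V in 𝒱 has S \ f V nowhere dense
  have key : ∀ V ∈ 𝒱, V.Nonempty → IsNowhereDense (S \ f V) := by
    intro V hV ⟨x, hx⟩
    rcases hsplit (f V) (hfD V hV) with h | h
    · exfalso
      have hsub : V ∩ f V ⊆ S ∩ f V := by
        intro y hy
        exact ⟨hTS (hMT (hMeq ▸ mem_biUnion hV hy)), hy.2⟩
      have h1 : V ⊆ closure (V ∩ f V) :=
        (h𝒟 (f V) (hfD V hV)).open_subset_closure_inter (hopen V hV)
      have h2 : V ⊆ interior (closure (S ∩ f V)) :=
        interior_maximal (h1.trans (closure_mono hsub)) (hopen V hV)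
      exact absurd (h2 hx) (by rw [h]; exact notMem_empty x)
    · exact h
  refine ⟨(⋃ V ∈ 𝒱, V \ closure (S \ f V)) ∩ S, ?_, ⟨_, ?_, rfl⟩, ?_⟩
  · rintro x ⟨hxU, hxS⟩
    obtain ⟨V, hV, hxV, hxc⟩ := mem_iUnion₂.mp hxU
    have hxf : x ∈ f V := by
      by_contra hxf
      exact hxc (subset_closure ⟨hxS, hxf⟩)
    exact hMT (hMeq ▸ mem_biUnion hV ⟨hxV, hxf⟩)
  · exact isOpen_biUnion fun V hV => (hopen V hV).sdiff isClosed_closure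
  · -- density
    have hUdense' : Dense (⋃ V ∈ 𝒱, V \ closure (S \ f V)) := by
      rw [dense_iff_inter_open]
      intro W hW hWne
      obtain ⟨x, hxW, hx𝒱⟩ := hUdense.inter_open_nonempty W hW hWne
      obtain ⟨V, hV, hxV⟩ := hx𝒱
      have hWV : IsOpen (W ∩ V) := hW.inter (hopen V hV)
      have hnd := key V hV ⟨x, hxV⟩
      have : ¬ (W ∩ V ⊆ closure (S \ f V)) := by
        intro hsub
        have : W ∩ V ⊆ interior (closure (S \ f V)) := interior_maximal hsub hWV
        rw [hnd] at this
        exact this ⟨hxW, hxV⟩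
      obtain ⟨y, hyWV, hyc⟩ := not_subset.mp this
      exact ⟨y, hyWV.1, mem_biUnion hV ⟨hyWV.2, hyc⟩⟩
    have := hUdense'.inter_of_isOpen_left hS
      (isOpen_biUnion fun V hV => (hopen V hV).sdiff isClosed_closure)
    rw [this.closure_eq]
    exact subset_univ S
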